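/- Define q_m(t) = (mt − (m+1))((m+1)t − m) for positive integers m. If m ≠ n are positive integers, then q_m and q_n are strongly coprime: for all nonzero integers j, k, the polynomials q_m(t^j) and q_n(t^k) are coprime in ℚ[t, t⁻¹]; equivalently, there are no nonzero complex roots r_m of q_m and r_n of q_n and nonzero integers k, j with r_m^k = r_n^j. -/

import Mathlib

open Polynomial

/-- The polynomial `q_m(t) = (mt − (m+1))((m+1)t − m)`. -/
noncomputable def qpoly (m : ℕ) : Polynomial ℚ :=
  (C (m : ℚ) * X - C ((m : ℚ) + 1)) * (C ((m : ℚ) + 1) * X - C (m : ℚ))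

/-- View a Laurent polynomial over `ℚ` as a finitely supported function `ℤ →₀ ℚ`. -/
def toF (p : LaurentPolynomial ℚ) : ℤ →₀ ℚ := p.coeff

/-- The substitution `t ↦ t^j` on Laurent polynomials over `ℚ`. -/
noncomputable def substPow (j : ℤ) (p : LaurentPolynomial ℚ) : LaurentPolynomial ℚ :=
  AddMonoidAlgebra.ofCoeff (Finsupp.mapDomain (fun i => j * i) (toF p))

namespace StrongCoprimeAux

open LaurentPolynomial (T T_zero T_add T_pow)

lemma keyNat (m n a b : ℕ) (hmn : m < n) (hm : 1 ≤ m) (ha : 1 ≤ a) (hb : 1 ≤ b)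
    (h1 : (m+1)^a = (n+1)^b) (h2 : m^a = n^b) : False := by
  rcases eq_or_lt_of_le hm with hm1 | hm2
  · -- m = 1
    have : n ^ b = 1 := by rw [← h2, ← hm1, one_pow]
    have h1n : 1 < n ^ b := Nat.one_lt_pow (by omega) (by omega)
    omega
  · -- m ≥ 2
    have hba : b ≤ a := by
      by_contra hab
      push_neg at hab
      have h3 : m ^ a < n ^ a := Nat.pow_lt_pow_left hmn (by omega)
      have h4 : n ^ a < n ^ b := Nat.pow_lt_pow_right (by omega) hab
      omega
    -- real inequality
    have hmR : (0:ℝ) < m := by positivity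
    have hnR : (0:ℝ) < n := by exact_mod_cast (by omega : 0 < n)
    have hx : (1:ℝ) < ((m:ℝ)+1)/m := (one_lt_div hmR).2 (by linarith)
    have hyx : ((n:ℝ)+1)/n < ((m:ℝ)+1)/m := by
      rw [div_lt_div_iff₀ hnR hmR]
      have : (m:ℝ) < n := by exact_mod_cast hmn
      nlinarith
    have hy0 : (0:ℝ) ≤ ((n:ℝ)+1)/n := by positivity
    have heq : (((m:ℝ)+1)/m)^a = (((n:ℝ)+1)/n)^b := by
      rw [div_pow, div_pow]
      have e1 : ((m:ℝ)+1)^a = ((n:ℝ)+1)^b := by exact_mod_cast h1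
      have e2 : (m:ℝ)^a = (n:ℝ)^b := by exact_mod_cast h2
      rw [e1, e2]
    have hle : (((m:ℝ)+1)/m)^b ≤ (((m:ℝ)+1)/m)^a := pow_le_pow_right₀ (le_of_lt hx) hba
    have hlt : (((n:ℝ)+1)/n)^b < (((m:ℝ)+1)/m)^b := pow_lt_pow_left₀ hyx hy0 (by omega)
    linarith

lemma keyNatPos (m n a b : ℕ) (hm : 0 < m) (hn : 0 < n) (hmn : m ≠ n) (ha : 0 < a) (hb : 0 < b)
    (h1 : (m+1)^a = (n+1)^b) (h2 : m^a = n^b) : False := by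
  rcases lt_or_gt_of_ne hmn with h | h
  · exact keyNat m n a b h hm ha hb h1 h2
  · exact keyNat n m b a h hn hb ha h1.symm h2.symm

lemma realPosCase (m n : ℕ) (hm : 0 < m) (hn : 0 < n) (hmn : m ≠ n) (a b : ℕ)
    (ha : 0 < a) (hb : 0 < b) (heq : (((m:ℝ)+1)/m) ^ a = (((n:ℝ)+1)/n) ^ b) : False := by
  have hmR : (0:ℝ) < m := by exact_mod_cast hm
  have hnR : (0:ℝ) < n := by exact_mod_cast hn
  rw [div_pow, div_pow, div_eq_div_iff (by positivity) (by positivity)] at heq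
  have h1 : (m+1)^a * n^b = (n+1)^b * m^a := by exact_mod_cast heq
  have c1 : Nat.Coprime ((m+1)^a) (m^a) :=
    (show Nat.Coprime (m+1) m from
      (Nat.add_comm 1 m) ▸ Nat.coprime_add_self_left.mpr (Nat.coprime_one_left m)).pow a a
  have c2 : Nat.Coprime ((n+1)^b) (n^b) :=
    (show Nat.Coprime (n+1) n from
      (Nat.add_comm 1 n) ▸ Nat.coprime_add_self_left.mpr (Nat.coprime_one_left n)).pow b b
  have d1 : (m+1)^a ∣ (n+1)^b := by
    have : (m+1)^a ∣ (n+1)^b * m^a := ⟨n^b, by linarith [h1]⟩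
    exact (Nat.Coprime.dvd_of_dvd_mul_right c1 this)
  have d2 : (n+1)^b ∣ (m+1)^a := by
    have : (n+1)^b ∣ (m+1)^a * n^b := ⟨m^a, by linarith [h1]⟩
    exact (Nat.Coprime.dvd_of_dvd_mul_right c2 this)
  have e1 : (m+1)^a = (n+1)^b := Nat.dvd_antisymm d1 d2
  have e2 : m^a = n^b := by
    have h2 : (n+1)^b * m^a = (n+1)^b * n^b := by
      calc (n+1)^b * m^a = (m+1)^a * n^b := h1.symm
        _ = (n+1)^b * n^b := by rw [e1]
    exact Nat.eq_of_mul_eq_mul_left (by positivity) h2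
  exact keyNatPos m n a b hm hn hmn ha hb e1 e2

lemma realNe (m n : ℕ) (hm : 0 < m) (hn : 0 < n) (hmn : m ≠ n) (a b : ℤ) (ha : a ≠ 0) (hb : b ≠ 0)
    (heq : (((m:ℝ)+1)/m) ^ a = (((n:ℝ)+1)/n) ^ b) : False := by
  have hmR : (0:ℝ) < m := by exact_mod_cast hm
  have hnR : (0:ℝ) < n := by exact_mod_cast hn
  set x : ℝ := ((m:ℝ)+1)/m with hxdef
  set y : ℝ := ((n:ℝ)+1)/n with hydef
  have hx : 1 < x := (one_lt_div hmR).2 (by linarith)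
  have hy : 1 < y := (one_lt_div hnR).2 (by linarith)
  have hsign : (0 < a ∧ 0 < b) ∨ (a < 0 ∧ b < 0) := by
    rcases lt_or_gt_of_ne ha with ha' | ha' <;> rcases lt_or_gt_of_ne hb with hb' | hb'
    · exact Or.inr ⟨ha', hb'⟩
    · exfalso
      have h1 : x ^ a < 1 := zpow_lt_one_of_neg₀ hx ha'
      have h2 : 1 < y ^ b := one_lt_zpow₀ hy hb'
      linarith
    · exfalso
      have h1 : 1 < x ^ a := one_lt_zpow₀ hx ha'
      have h2 : y ^ b < 1 := zpow_lt_one_of_neg₀ hy hb'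
      linarith
    · exact Or.inl ⟨ha', hb'⟩
  rcases hsign with ⟨ha', hb'⟩ | ⟨ha', hb'⟩
  · have e : x ^ a.toNat = y ^ b.toNat := by
      rw [← zpow_natCast, ← zpow_natCast, Int.toNat_of_nonneg ha'.le, Int.toNat_of_nonneg hb'.le]
      exact heq
    exact realPosCase m n hm hn hmn a.toNat b.toNat (by omega) (by omega) e
  · have e : x ^ (-a).toNat = y ^ (-b).toNat := by
      rw [← zpow_natCast, ← zpow_natCast, Int.toNat_of_nonneg (by omega : (0:ℤ) ≤ -a),
        Int.toNat_of_nonneg (by omega : (0:ℤ) ≤ -b), zpow_neg, zpow_neg, heq]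
    exact realPosCase m n hm hn hmn (-a).toNat (-b).toNat (by omega) (by omega) e

lemma root_char (m : ℕ) (hm : 0 < m) (r : ℂ) (h : aeval r (qpoly m) = 0) :
    r = ((((m:ℝ)+1)/m : ℝ) : ℂ) ∨ r = ((((m:ℝ)+1)/m : ℝ) : ℂ)⁻¹ := by
  have hm0 : ((m:ℂ)) ≠ 0 := by exact_mod_cast hm.ne'
  have hm1 : ((m:ℂ)+1) ≠ 0 := by
    intro h'
    have : (m:ℂ) = -1 := by linear_combination h'
    have : ((m:ℝ):ℂ) = ((-1:ℝ):ℂ) := by push_cast; exact this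
    have : (m:ℝ) = -1 := by exact_mod_cast this
    have : (0:ℝ) ≤ m := by positivity
    linarith
  have hC : ((m:ℂ) * r - ((m:ℂ)+1)) * (((m:ℂ)+1) * r - m) = 0 := by
    have := h
    simp only [qpoly, map_mul, map_sub, aeval_X, aeval_C] at this
    push_cast at this
    convert this using 2
  have hcast : ((((m:ℝ)+1)/m : ℝ) : ℂ) = ((m:ℂ)+1)/m := by push_cast; ring
  rcases mul_eq_zero.mp hC with h1 | h1
  · left
    rw [hcast]
    field_simp at h1 ⊢
    linear_combination h1
  · right
    rw [hcast, inv_div]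
    field_simp at h1 ⊢
    linear_combination h1

lemma part2 (m n : ℕ) (hm : 0 < m) (hn : 0 < n) (hmn : m ≠ n) :
    ¬ ∃ (rm rn : ℂ) (k j : ℤ), rm ≠ 0 ∧ rn ≠ 0 ∧ k ≠ 0 ∧ j ≠ 0 ∧
        aeval rm (qpoly m) = 0 ∧ aeval rn (qpoly n) = 0 ∧ rm ^ k = rn ^ j := by
  rintro ⟨rm, rn, k, j, hrm0, hrn0, hk, hj, h1, h2, hpow⟩
  set x : ℝ := ((m:ℝ)+1)/m with hxdef
  set y : ℝ := ((n:ℝ)+1)/n with hydef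
  have hxC : ∃ a : ℤ, a ≠ 0 ∧ rm ^ k = ((x:ℂ)) ^ a := by
    rcases root_char m hm rm h1 with h | h
    · exact ⟨k, hk, by rw [h]⟩
    · exact ⟨-k, by omega, by rw [h, inv_zpow, ← zpow_neg]⟩
  have hyC : ∃ b : ℤ, b ≠ 0 ∧ rn ^ j = ((y:ℂ)) ^ b := by
    rcases root_char n hn rn h2 with h | h
    · exact ⟨j, hj, by rw [h]⟩
    · exact ⟨-j, by omega, by rw [h, inv_zpow, ← zpow_neg]⟩
  obtain ⟨a, ha, hea⟩ := hxC
  obtain ⟨b, hb, heb⟩ := hyC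
  have : ((x ^ a : ℝ) : ℂ) = ((y ^ b : ℝ) : ℂ) := by
    push_cast
    rw [← hea, ← heb, hpow]
  exact realNe m n hm hn hmn a b ha hb (Complex.ofReal_inj.mp this)

lemma substPow_toLaurent (j : ℤ) (P : Polynomial ℚ) :
    substPow j (P.toLaurent) = aeval (LaurentPolynomial.T j) P := by
  induction P using Polynomial.induction_on' with
  | add p q hp hq =>
    rw [map_add, map_add, ← hp, ← hq]
    show AddMonoidAlgebra.ofCoeff (Finsupp.mapDomain _ (p.toLaurent.coeff + q.toLaurent.coeff)) = _
    rw [Finsupp.mapDomain_add]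
    rfl
  | monomial nn a =>
    rw [Polynomial.toLaurent_C_mul_T]
    rw [← LaurentPolynomial.single_eq_C_mul_T]
    show AddMonoidAlgebra.ofCoeff (Finsupp.mapDomain (fun i => j * i) (Finsupp.single (nn:ℤ) a)) = _
    rw [Finsupp.mapDomain_single, AddMonoidAlgebra.ofCoeff_single]
    rw [aeval_monomial, LaurentPolynomial.T_pow, LaurentPolynomial.single_eq_C_mul_T]
    rw [mul_comm (nn:ℤ) j]
    rw [← LaurentPolynomial.C_eq_algebraMap]

lemma coprime_of_no_common_root (A B : Polynomial ℚ) (hA : A ≠ 0)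
    (h : ∀ r : ℂ, aeval r A = 0 → aeval r B = 0 → False) : IsCoprime A B := by
  classical
  by_contra hc
  have hd : ¬ IsUnit (EuclideanDomain.gcd A B) := fun hu => hc (EuclideanDomain.gcd_isUnit_iff.mp hu)
  set d := EuclideanDomain.gcd A B with hddef
  have hd0 : d ≠ 0 := fun h0 => hA (EuclideanDomain.gcd_eq_zero_iff.mp h0).1
  have hdeg : d.degree ≠ 0 := fun hdeg => hd (isUnit_iff_degree_eq_zero.mpr hdeg)
  have hdegpos : 0 < d.degree :=
    lt_of_le_of_ne (zero_le_degree_iff.mpr hd0) (Ne.symm hdeg)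
  have hdegC : 0 < (d.map (algebraMap ℚ ℂ)).degree := by
    rwa [degree_map_eq_of_injective (algebraMap ℚ ℂ).injective]
  obtain ⟨r, hr⟩ := Complex.exists_root hdegC
  have hr' : aeval r d = 0 := by
    rwa [aeval_def, ← eval_map]
  have hdvdA : aeval r A = 0 := by
    obtain ⟨e, he⟩ := EuclideanDomain.gcd_dvd_left A B
    rw [← hddef] at he
    rw [he, map_mul, hr', zero_mul]
  have hdvdB : aeval r B = 0 := by
    obtain ⟨e, he⟩ := EuclideanDomain.gcd_dvd_right A B
    rw [← hddef] at he
    rw [he, map_mul, hr', zero_mul]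
  exact h r hdvdA hdvdB

lemma toLaurent_comp_pow (P : Polynomial ℚ) (J : ℕ) :
    Polynomial.toLaurent (P.comp (X ^ J)) = aeval (T (J:ℤ) : LaurentPolynomial ℚ) P := by
  have h1 : P.comp (X ^ J) = aeval (X ^ J) P := by
    rw [aeval_def, eval₂_eq_eval_map]
    simp [comp, eval₂_eq_eval_map]
  rw [h1, ← Polynomial.toLaurentAlg_apply, ← aeval_algHom_apply]
  congr 1
  rw [Polynomial.toLaurentAlg_apply, map_pow, Polynomial.toLaurent_X]
  rw [LaurentPolynomial.T_pow, mul_one]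

lemma aeval_T_neg (m : ℕ) (J : ℤ) :
    aeval (T (-J) : LaurentPolynomial ℚ) (qpoly m)
      = T (-(2*J)) * aeval (T J : LaurentPolynomial ℚ) (qpoly m) := by
  simp only [qpoly, map_mul, map_sub, aeval_X, aeval_C, ← LaurentPolynomial.C_eq_algebraMap]
  have hT : (T (-J) : LaurentPolynomial ℚ) * T J = 1 := by
    rw [← T_add]; simp [T_zero]
  have h2 : (T (-(2*J)) : LaurentPolynomial ℚ) = T (-J) * T (-J) := by
    rw [← T_add]; ring_nf
  rw [h2]
  ring_nf
  rw [show (T (-J) : LaurentPolynomial ℚ) ^ 2 = T (-J) * T (-J) by ring]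
  have expand : ∀ (c d : LaurentPolynomial ℚ),
      (c * T (-J) - d) * (d * T (-J) - c)
        = (T (-J) * T (-J)) * ((c * T J - d) * (d * T J - c)) := by
    intro c d
    have : (T (-J) * T (-J)) * ((c * T J - d) * (d * T J - c))
        = (c * (T (-J) * T J) - d * T (-J)) * (d * (T (-J) * T J) - c * T (-J)) := by ring
    rw [this, hT]
    ring
  have := expand (LaurentPolynomial.C (m:ℚ)) (LaurentPolynomial.C ((m:ℚ)+1))
  ring_nf at this ⊢
  exact this

lemma aeval_zero_comp_ne (m : ℕ) (hm : 0 < m) (J : ℕ) (hJ : 0 < J) :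
    aeval (0:ℂ) ((qpoly m).comp (X ^ J)) ≠ 0 := by
  have hm0 : ((m:ℂ)) ≠ 0 := by exact_mod_cast hm.ne'
  have hm1 : ((m:ℂ)+1) ≠ 0 := by
    have : ((m:ℂ)+1) = ((m+1 : ℕ) : ℂ) := by push_cast; ring
    rw [this]
    exact_mod_cast (by omega : m + 1 ≠ 0)
  rw [aeval_comp]
  simp only [map_pow, aeval_X, zero_pow hJ.ne']
  simp only [qpoly, map_mul, map_sub, aeval_X, aeval_C]
  push_cast
  intro h
  rcases mul_eq_zero.mp h with h1 | h1
  · apply hm1; linear_combination -h1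
  · apply hm0; linear_combination -h1

lemma comp_pow_ne_zero (m : ℕ) (hm : 0 < m) (J : ℕ) (hJ : 0 < J) :
    (qpoly m).comp (X ^ J) ≠ 0 := by
  intro h0
  apply aeval_zero_comp_ne m hm J hJ
  rw [h0, map_zero]

lemma coprime_comp (m n : ℕ) (hm : 0 < m) (hn : 0 < n) (hmn : m ≠ n) (J K : ℕ)
    (hJ : 0 < J) (hK : 0 < K) :
    IsCoprime ((qpoly m).comp (X ^ J)) ((qpoly n).comp (X ^ K)) := by
  apply coprime_of_no_common_root _ _ (comp_pow_ne_zero m hm J hJ)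
  intro r h1 h2
  have hr0 : r ≠ 0 := by
    intro h0
    exact aeval_zero_comp_ne m hm J hJ (h0 ▸ h1)
  rw [aeval_comp] at h1 h2
  simp only [map_pow, aeval_X] at h1 h2
  apply part2 m n hm hn hmn
  refine ⟨r ^ J, r ^ K, (K:ℤ), (J:ℤ), pow_ne_zero _ hr0, pow_ne_zero _ hr0,
    by exact_mod_cast hK.ne', by exact_mod_cast hJ.ne', h1, h2, ?_⟩
  rw [zpow_natCast, zpow_natCast, ← pow_mul, ← pow_mul, mul_comm]

lemma substPow_qpoly_eq (m : ℕ) (j : ℤ) (hj : j ≠ 0) :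
    ∃ (u : LaurentPolynomial ℚ), IsUnit u ∧
      substPow j ((qpoly m).toLaurent)
        = u * Polynomial.toLaurent ((qpoly m).comp (X ^ j.natAbs)) := by
  rw [substPow_toLaurent, toLaurent_comp_pow]
  rcases Int.natAbs_eq j with h | h
  · exact ⟨1, isUnit_one, by rw [one_mul, ← h]⟩
  · refine ⟨T (-(2*(j.natAbs:ℤ))), LaurentPolynomial.isUnit_T _, ?_⟩
    rw [show (T (j:ℤ) : LaurentPolynomial ℚ) = T (-(j.natAbs:ℤ)) by rw [← h],
      aeval_T_neg]

end StrongCoprimeAux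

open StrongCoprimeAux

/-- If `m ≠ n` are positive integers then `q_m` and `q_n` are strongly coprime:
for all nonzero integers `j, k`, `q_m(t^j)` and `q_n(t^k)` are coprime in `ℚ[t,t⁻¹]`;
equivalently, no nonzero complex roots `r_m` of `q_m`, `r_n` of `q_n` satisfy
`r_m^k = r_n^j` for nonzero integers `k, j`. -/
theorem stmt3 (m n : ℕ) (hm : 0 < m) (hn : 0 < n) (hmn : m ≠ n) :
    (∀ j k : ℤ, j ≠ 0 → k ≠ 0 →
        IsCoprime (substPow j ((qpoly m).toLaurent)) (substPow k ((qpoly n).toLaurent))) ∧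
      ¬ ∃ (rm rn : ℂ) (k j : ℤ), rm ≠ 0 ∧ rn ≠ 0 ∧ k ≠ 0 ∧ j ≠ 0 ∧
          aeval rm (qpoly m) = 0 ∧ aeval rn (qpoly n) = 0 ∧ rm ^ k = rn ^ j := by
  constructor
  · intro j k hj hk
    obtain ⟨u, hu, hequ⟩ := substPow_qpoly_eq m j hj
    obtain ⟨v, hv, heqv⟩ := substPow_qpoly_eq n k hk
    rw [hequ, heqv]
    rw [isCoprime_mul_unit_left_left hu, isCoprime_mul_unit_left_right hv]
    have hc := coprime_comp m n hm hn hmn j.natAbs k.natAbs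
      (Int.natAbs_pos.mpr hj) (Int.natAbs_pos.mpr hk)
    exact hc.map Polynomial.toLaurent
  · exact part2 m n hm hn hmn
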